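/- Policy gradient with marginal gains (Theorem 4.1): under the policy parameterization hypotheses, and assuming ∑_{a ∈ A} π θ h s' a = 1 for every θ ∈ ℝ^d, h, s', for every choice of baseline b assigning a real number to each trajectory prefix, the map θ ↦ J(θ) is Fréchet-differentiable at θ₀ with derivative equal to ∑_τ f(τ; π θ₀) · ∑_{i=0}^{H−1} ( ∑_{j=i}^{H−1} (F(τ_{0:j+1}) − F(τ_{0:j})) − b(prefix of τ up to step i) ) • ( (π θ₀ i (s i) (a i))⁻¹ • D i (s i) (a i) ), where the outer sum ranges over all trajectories τ = (s, a) and τ_{0:j} := {(l, s l) : l ≤ j}. -/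

import Mathlib

open Finset

/-- A trajectory: states at times `0,…,H` and actions at times `0,…,H−1`. -/
abbrev Traj (S A : Type) (H : ℕ) : Type := (Fin (H + 1) → S) × (Fin H → A)

variable {S A : Type} {H : ℕ}

/-- The set of time-augmented states visited by `τ` up to step `j`. -/
def visitedUpTo [DecidableEq S] (τ : Traj S A H) (j : Fin (H + 1)) :
    Finset (Fin (H + 1) × S) :=
  (Finset.univ.filter fun l => l ≤ j).image fun l => (l, τ.1 l)

/-- The set of time-augmented states visited by the whole trajectory `τ`. -/
def visitedAll [DecidableEq S] (τ : Traj S A H) : Finset (Fin (H + 1) × S) :=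
  Finset.univ.image fun l => (l, τ.1 l)

/-- Probability of trajectory `τ` under a Markovian policy table `π`. -/
def trajProb (ρ : S → ℝ) (P : Fin H → S → A → S → ℝ) (π : Fin H → S → A → ℝ)
    (τ : Traj S A H) : ℝ :=
  ρ (τ.1 0) *
    ∏ h : Fin H, π h (τ.1 h.castSucc) (τ.2 h) * P h (τ.1 h.castSucc) (τ.2 h) (τ.1 h.succ)

/-- The objective `J(π) = ∑_τ f(τ;π) · F(τ)`. -/
def Jobj [Fintype S] [Fintype A] [DecidableEq S] (ρ : S → ℝ) (P : Fin H → S → A → S → ℝ)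
    (F : Finset (Fin (H + 1) × S) → ℝ) (π : Fin H → S → A → ℝ) : ℝ :=
  ∑ τ : Traj S A H, trajProb ρ P π τ * F (visitedAll τ)

/-- `π` is a (stochastic) Markovian policy. -/
def IsMarkovPolicy [Fintype A] (π : Fin H → S → A → ℝ) : Prop :=
  (∀ h s a, 0 ≤ π h s a) ∧ ∀ h s, ∑ a : A, π h s a = 1

/-- `π` is a deterministic Markovian policy. -/
def IsDetMarkovPolicy [Fintype A] (π : Fin H → S → A → ℝ) : Prop :=
  IsMarkovPolicy π ∧ ∀ h s, ∃ a, π h s a = 1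

/-- A history-dependent policy: at step `h`, given the prefix
`((s 0, a 0), …, (s (h−1), a (h−1)), s h)`, a weight for each action. -/
abbrev HistPolicy (S A : Type) (H : ℕ) : Type :=
  (h : Fin H) → ((Fin h.1 → S × A) × S) → A → ℝ

/-- The prefix of trajectory `τ` up to step `h`. -/
def prefixOf (τ : Traj S A H) (h : Fin H) : (Fin h.1 → S × A) × S :=
  (fun l => (τ.1 ⟨l.1, by have := l.2; have := h.2; omega⟩,
             τ.2 ⟨l.1, by have := l.2; have := h.2; omega⟩),
   τ.1 h.castSucc)

/-- Probability of trajectory `τ` under a history-dependent policy `π`. -/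
def trajProbHist (ρ : S → ℝ) (P : Fin H → S → A → S → ℝ) (π : HistPolicy S A H)
    (τ : Traj S A H) : ℝ :=
  ρ (τ.1 0) *
    ∏ h : Fin H, π h (prefixOf τ h) (τ.2 h) * P h (τ.1 h.castSucc) (τ.2 h) (τ.1 h.succ)

/-- The objective for history-dependent policies. -/
def JobjHist [Fintype S] [Fintype A] [DecidableEq S] (ρ : S → ℝ)
    (P : Fin H → S → A → S → ℝ) (F : Finset (Fin (H + 1) × S) → ℝ)
    (π : HistPolicy S A H) : ℝ :=
  ∑ τ : Traj S A H, trajProbHist ρ P π τ * F (visitedAll τ)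

/-- `π` is a (stochastic) history-dependent policy. -/
def IsHistPolicy [Fintype A] (π : HistPolicy S A H) : Prop :=
  (∀ h pre a, 0 ≤ π h pre a) ∧ ∀ h pre, ∑ a : A, π h pre a = 1

/-- `π` is a deterministic history-dependent policy. -/
def IsDetHistPolicy [Fintype A] (π : HistPolicy S A H) : Prop :=
  IsHistPolicy π ∧ ∀ h pre, ∃ a, π h pre a = 1

section PGHelpers
variable {S A : Type} [Fintype S] [Fintype A]

private lemma cons_castLE {X : Type} {k n : ℕ} (hk : k + 1 ≤ n + 1) (x0 : X) (f : Fin n → X) :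
    (fun l : Fin (k + 1) => (Fin.cons x0 f : Fin (n + 1) → X) (Fin.castLE hk l))
      = Fin.cons x0 (fun l : Fin k => f (Fin.castLE (Nat.succ_le_succ_iff.mp hk) l)) := by
  funext l
  induction l using Fin.cases with
  | zero => rfl
  | succ j =>
    have h1 : Fin.castLE hk j.succ = (Fin.castLE (Nat.succ_le_succ_iff.mp hk) j).succ :=
      Fin.ext rfl
    rw [h1, Fin.cons_succ, Fin.cons_succ]

private lemma cons_castLE_succ {X : Type} {n : ℕ} (m' : Fin n) (hk : (Fin.succ m').1 ≤ n + 1)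
    (x0 : X) (f : Fin n → X) :
    (fun l : Fin (Fin.succ m').1 => (Fin.cons x0 f : Fin (n + 1) → X) (Fin.castLE hk l))
      = Fin.cons x0 (fun l : Fin m'.1 => f (Fin.castLE m'.2.le l)) :=
  cons_castLE hk x0 f

private lemma sum_pi_succ {M : Type*} [AddCommMonoid M] {X : Type} [Fintype X] {n : ℕ}
    (f : (Fin (n + 1) → X) → M) :
    ∑ s : Fin (n + 1) → X, f s = ∑ x : X, ∑ s : Fin n → X, f (Fin.cons x s) := by
  rw [← Equiv.sum_comp (Fin.consEquiv fun _ : Fin (n + 1) => X) f, Fintype.sum_prod_type]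
  rfl

private lemma peel {M : Type*} [AddCommMonoid M] [Module ℝ M] {n : ℕ}
    (π' : Fin (n + 1) → S → A → ℝ) (P' : Fin (n + 1) → S → A → S → ℝ) (ρ : S → ℝ)
    (g : (Fin (n + 2) → S) → (Fin (n + 1) → A) → M) :
    ∑ s : Fin (n + 2) → S, ∑ a : Fin (n + 1) → A,
      (ρ (s 0) * ∏ h : Fin (n + 1),
        π' h (s h.castSucc) (a h) * P' h (s h.castSucc) (a h) (s h.succ)) • g s a
    = ∑ s0 : S, ∑ a0 : A, (ρ s0 * π' 0 s0 a0) •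
        ∑ s' : Fin (n + 1) → S, ∑ a' : Fin n → A,
          (P' 0 s0 a0 (s' 0) * ∏ i : Fin n,
            π' i.succ (s' i.castSucc) (a' i) * P' i.succ (s' i.castSucc) (a' i) (s' i.succ)) •
            g (Fin.cons s0 s') (Fin.cons a0 a') := by
  rw [sum_pi_succ]
  refine Finset.sum_congr rfl fun s0 _ => ?_
  trans ∑ s' : Fin (n + 1) → S, ∑ a0 : A, ∑ a' : Fin n → A,
      (ρ ((Fin.cons s0 s' : Fin (n + 2) → S) 0) * ∏ h : Fin (n + 1),
        π' h ((Fin.cons s0 s' : Fin (n + 2) → S) h.castSucc)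
            ((Fin.cons a0 a' : Fin (n + 1) → A) h) *
          P' h ((Fin.cons s0 s' : Fin (n + 2) → S) h.castSucc)
            ((Fin.cons a0 a' : Fin (n + 1) → A) h)
            ((Fin.cons s0 s' : Fin (n + 2) → S) h.succ)) •
        g (Fin.cons s0 s') (Fin.cons a0 a')
  · exact Finset.sum_congr rfl fun s' _ => sum_pi_succ _
  rw [Finset.sum_comm]
  refine Finset.sum_congr rfl fun a0 _ => ?_
  conv_rhs => rw [Finset.smul_sum]
  refine Finset.sum_congr rfl fun s' _ => ?_
  conv_rhs => rw [Finset.smul_sum]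
  refine Finset.sum_congr rfl fun a' _ => ?_
  simp only [Fin.prod_univ_succ, Fin.cons_zero, Fin.cons_succ, Fin.castSucc_zero,
    ← Fin.succ_castSucc]
  rw [smul_smul]
  congr 1
  ring

private lemma prob_sum_one' :
    ∀ (n : ℕ) (π' : Fin n → S → A → ℝ) (P' : Fin n → S → A → S → ℝ),
      (∀ h s, ∑ a : A, π' h s a = 1) → (∀ h s a, ∑ s' : S, P' h s a s' = 1) →
      ∀ ρ : S → ℝ, ∑ x : S, ρ x = 1 →
      ∑ s : Fin (n + 1) → S, ∑ a : Fin n → A,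
        ρ (s 0) * ∏ h : Fin n,
          π' h (s h.castSucc) (a h) * P' h (s h.castSucc) (a h) (s h.succ) = 1
  | 0, π', P', hπ, hP, ρ, hρ => by
      rw [sum_pi_succ]
      simpa using hρ
  | (n + 1), π', P', hπ, hP, ρ, hρ => by
      have hpeel := peel (M := ℝ) π' P' ρ (fun _ _ => (1 : ℝ))
      simp only [smul_eq_mul, mul_one] at hpeel
      rw [hpeel]
      have inner : ∀ s0 a0, ∑ s' : Fin (n + 1) → S, ∑ a' : Fin n → A,
          P' 0 s0 a0 (s' 0) * ∏ i : Fin n,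
            π' i.succ (s' i.castSucc) (a' i) *
              P' i.succ (s' i.castSucc) (a' i) (s' i.succ) = 1 :=
        fun s0 a0 => prob_sum_one' n (fun i => π' i.succ) (fun i => P' i.succ)
          (fun h s => hπ h.succ s) (fun h s a => hP h.succ s a) (P' 0 s0 a0) (hP 0 s0 a0)
      simp only [inner, mul_one]
      simp only [← Finset.mul_sum, hπ, mul_one]
      exact hρ


private lemma score_sum_zero {E : Type*} [AddCommGroup E] [Module ℝ E] :
    ∀ (n : ℕ) (π' : Fin n → S → A → ℝ) (P' : Fin n → S → A → S → ℝ),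
      (∀ h s, ∑ a : A, π' h s a = 1) → (∀ h s a, ∑ s' : S, P' h s a s' = 1) →
      ∀ (ρ : S → ℝ) (m : Fin n) (w : (Fin (m.1 + 1) → S) → (Fin m.1 → A) → ℝ)
        (u : S → A → E), (∀ s, ∑ a : A, π' m s a • u s a = 0) →
      ∑ s : Fin (n + 1) → S, ∑ a : Fin n → A,
        (ρ (s 0) * ∏ h : Fin n,
          π' h (s h.castSucc) (a h) * P' h (s h.castSucc) (a h) (s h.succ)) •
          (w (fun l => s (Fin.castLE (Nat.succ_le_succ m.2.le) l))
             (fun l => a (Fin.castLE m.2.le l)) •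
            u (s m.castSucc) (a m)) = 0
  | 0, π', P', hπ, hP, ρ, m, w, u, hu => m.elim0
  | (n + 1), π', P', hπ, hP, ρ, m, w, u, hu => by
      induction m using Fin.cases with
      | zero =>
        have hnorm : ∀ (s : Fin (n + 2) → S) (a : Fin (n + 1) → A),
            (w (fun l => s (Fin.castLE (Nat.succ_le_succ (0 : Fin (n + 1)).2.le) l))
               (fun l => a (Fin.castLE (0 : Fin (n + 1)).2.le l)) •
              u (s (Fin.castSucc 0)) (a 0) : E)
            = w (fun _ => s 0) Fin.elim0 • u (s 0) (a 0) := by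
          intro s a
          have e1 : (fun l => s (Fin.castLE (Nat.succ_le_succ (0 : Fin (n + 1)).2.le) l))
              = (fun _ => s 0) :=
            funext fun l => by
              have hl : l = 0 := Subsingleton.elim (α := Fin 1) l 0
              rw [hl]
              rfl
          have e2 : (fun l => a (Fin.castLE (0 : Fin (n + 1)).2.le l)) = Fin.elim0 :=
            Subsingleton.elim (α := Fin 0 → A) _ _
          rw [e1, e2, Fin.castSucc_zero]
        simp only [hnorm]
        rw [peel π' P' ρ (fun s a => w (fun _ => s 0) Fin.elim0 • u (s 0) (a 0))]
        simp only [Fin.cons_zero]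
        have h1 : ∀ (s0 : S) (a0 : A), ∑ s' : Fin (n + 1) → S, ∑ a' : Fin n → A,
            P' 0 s0 a0 (s' 0) * ∏ i : Fin n,
              π' i.succ (s' i.castSucc) (a' i) *
                P' i.succ (s' i.castSucc) (a' i) (s' i.succ) = 1 :=
          fun s0 a0 => prob_sum_one' n (fun i => π' i.succ) (fun i => P' i.succ)
            (fun h s => hπ h.succ s) (fun h s a => hP h.succ s a) (P' 0 s0 a0) (hP 0 s0 a0)
        simp only [← Finset.sum_smul, h1, one_smul]
        refine Finset.sum_eq_zero fun s0 _ => ?_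
        have h2 : ∀ a0 : A, (ρ s0 * π' 0 s0 a0) • (w (fun _ => s0) Fin.elim0 • u s0 a0)
            = (ρ s0 * w (fun _ => s0) Fin.elim0) • (π' 0 s0 a0 • u s0 a0) := by
          intro a0
          rw [smul_smul, smul_smul]
          congr 1
          ring
        simp only [h2]
        rw [← Finset.smul_sum, hu s0, smul_zero]
      | succ m' =>
        rw [peel π' P' ρ (fun s a =>
          w (fun l => s (Fin.castLE (Nat.succ_le_succ (Fin.succ m').2.le) l))
            (fun l => a (Fin.castLE (Fin.succ m').2.le l)) •
            u (s (Fin.castSucc (Fin.succ m'))) (a (Fin.succ m')))]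
        refine Finset.sum_eq_zero fun s0 _ => Finset.sum_eq_zero fun a0 _ => ?_
        have IH := score_sum_zero n (fun i => π' i.succ) (fun i => P' i.succ)
          (fun h s => hπ h.succ s) (fun h s a => hP h.succ s a) (P' 0 s0 a0) m'
          (fun ts ta => w (Fin.cons s0 ts) (Fin.cons a0 ta)) u hu
        refine Eq.trans (congrArg (fun z => (ρ s0 * π' 0 s0 a0) • z) ?_) (smul_zero _)
        rw [← IH]
        refine Finset.sum_congr rfl fun s' _ => Finset.sum_congr rfl fun a' _ => ?_
        rw [cons_castLE, cons_castLE_succ]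
        simp only [← Fin.succ_castSucc, Fin.cons_succ]
        try rfl

end PGHelpers

section PGHelpers2
variable {S A : Type} {H : ℕ}

private lemma visited_trunc [DecidableEq S] (τ : Traj S A H) (i : Fin H) :
    visitedUpTo τ i.castSucc
      = (Finset.univ : Finset (Fin (i.1 + 1))).image
          (fun l => (Fin.castLE (Nat.succ_le_succ i.2.le) l,
            τ.1 (Fin.castLE (Nat.succ_le_succ i.2.le) l))) := by
  unfold visitedUpTo
  ext x
  simp only [mem_image, mem_filter, mem_univ, true_and]
  constructor
  · rintro ⟨l, hl, rfl⟩
    have hl' : l.1 < i.1 + 1 := by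
      have h0 : l.1 ≤ i.1 := by simpa using Fin.le_def.mp hl
      omega
    exact ⟨⟨l.1, hl'⟩, by simp [Fin.ext_iff]⟩
  · rintro ⟨l, rfl⟩
    refine ⟨Fin.castLE (Nat.succ_le_succ i.2.le) l, ?_, rfl⟩
    simp [Fin.le_def]
    omega

private lemma telescope [DecidableEq S] (F : Finset (Fin (H + 1) × S) → ℝ)
    (τ : Traj S A H) (i : Fin H) :
    ∑ j ∈ Finset.univ.filter (fun j : Fin H => i ≤ j),
      (F (visitedUpTo τ j.succ) - F (visitedUpTo τ j.castSucc))
    = F (visitedAll τ) - F (visitedUpTo τ i.castSucc) := by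
  have hlast : visitedUpTo τ (Fin.last H) = visitedAll τ := by
    unfold visitedUpTo visitedAll
    congr 1
    exact filter_true_of_mem fun l _ => Fin.le_last l
  set g : ℕ → ℝ := fun k => F (visitedUpTo τ ⟨min k H, by omega⟩) with hg
  have hstep : ∀ j : Fin H, F (visitedUpTo τ j.succ) - F (visitedUpTo τ j.castSucc)
      = g (j.1 + 1) - g j.1 := by
    intro j
    have h1 : (⟨min (j.1 + 1) H, by omega⟩ : Fin (H + 1)) = j.succ :=
      Fin.ext (by simp [Nat.min_eq_left j.2])
    have h2 : (⟨min j.1 H, by omega⟩ : Fin (H + 1)) = j.castSucc :=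
      Fin.ext (by simp [Nat.min_eq_left j.2.le])
    rw [hg]
    simp only [h1, h2]
  have h3 : ∑ j ∈ Finset.univ.filter (fun j : Fin H => i ≤ j),
      (F (visitedUpTo τ j.succ) - F (visitedUpTo τ j.castSucc))
      = ∑ j : Fin H, if i.1 ≤ j.1 then g (j.1 + 1) - g j.1 else 0 := by
    rw [sum_filter]
    refine Finset.sum_congr rfl fun j _ => ?_
    rw [hstep j]
    simp only [Fin.le_def]
  rw [h3, Fin.sum_univ_eq_sum_range (fun k => if i.1 ≤ k then g (k + 1) - g k else 0) H,
    ← Finset.sum_filter]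
  have h4 : (Finset.range H).filter (fun k => i.1 ≤ k) = Finset.Ico i.1 H := by
    ext k
    simp only [mem_filter, mem_range, mem_Ico]
    omega
  rw [h4, Finset.sum_Ico_eq_sum_range]
  set g2 : ℕ → ℝ := fun k => g (i.1 + k) with hg2
  calc ∑ k ∈ Finset.range (H - i.1), (g (i.1 + k + 1) - g (i.1 + k))
      = ∑ k ∈ Finset.range (H - i.1), (g2 (k + 1) - g2 k) := by
        refine Finset.sum_congr rfl fun k _ => ?_
        rw [hg2]
        simp only []
        rw [Nat.add_assoc]
    _ = g2 (H - i.1) - g2 0 := Finset.sum_range_sub g2 _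
    _ = g (i.1 + (H - i.1)) - g (i.1 + 0) := by rw [hg2]
    _ = F (visitedAll τ) - F (visitedUpTo τ i.castSucc) := by
        have e1 : i.1 + (H - i.1) = H := by omega
        have e2 : (⟨min H H, by omega⟩ : Fin (H + 1)) = Fin.last H := Fin.ext (by simp)
        have e3 : (⟨min (i.1 + 0) H, by omega⟩ : Fin (H + 1)) = i.castSucc :=
          Fin.ext (by simp [Nat.min_eq_left i.2.le])
        rw [hg]
        simp only [e1, e2, e3, hlast]

end PGHelpers2

set_option maxHeartbeats 2000000 in
/-- **Theorem 4.1.** Policy gradient with marginal gains: for any baseline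
`b` on trajectory prefixes, `θ ↦ J(θ)` is Fréchet-differentiable at `θ₀` with derivative
`∑_τ f(τ; π θ₀) • ∑_i (∑_{j≥i} (F(τ_{0:j+1}) − F(τ_{0:j})) − b(prefix_i τ)) •
((π θ₀ i (s i) (a i))⁻¹ • D i (s i) (a i))`. -/

theorem policy_gradient_marginal_gains
    (S A : Type) [Fintype S] [Fintype A] [DecidableEq S] [Nonempty S] [Nonempty A]
    (H : ℕ) (hH : 1 ≤ H)
    (ρ : S → ℝ) (hρ0 : ∀ s, 0 ≤ ρ s) (hρ1 : ∑ s : S, ρ s = 1)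
    (P : Fin H → S → A → S → ℝ)
    (hP0 : ∀ h s a s', 0 ≤ P h s a s') (hP1 : ∀ h s a, ∑ s' : S, P h s a s' = 1)
    (F : Finset (Fin (H + 1) × S) → ℝ)
    (d : ℕ) (π : (Fin d → ℝ) → Fin H → S → A → ℝ) (θ₀ : Fin d → ℝ)
    (D : Fin H → S → A → ((Fin d → ℝ) →L[ℝ] ℝ))
    (hdiff : ∀ h s a, HasFDerivAt (fun θ => π θ h s a) (D h s a) θ₀)
    (hpos : ∀ h s a, 0 < π θ₀ h s a)
    (hsum : ∀ (θ : Fin d → ℝ) h s', ∑ a : A, π θ h s' a = 1)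
    (b : (i : Fin H) → ((Fin i.1 → S × A) × S) → ℝ) :
    HasFDerivAt (fun θ => Jobj ρ P F (π θ))
      (∑ τ : Traj S A H,
        trajProb ρ P (π θ₀) τ •
          ∑ i : Fin H,
            ((∑ j ∈ Finset.univ.filter fun j : Fin H => i ≤ j,
                (F (visitedUpTo τ j.succ) - F (visitedUpTo τ j.castSucc)))
              - b i (prefixOf τ i)) •
              ((π θ₀ i (τ.1 i.castSucc) (τ.2 i))⁻¹ • D i (τ.1 i.castSucc) (τ.2 i)))
      θ₀ := by
  classical
  have hD0 : ∀ (i : Fin H) (s : S), ∑ a : A, D i s a = 0 := by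
    intro i s
    have h1 : HasFDerivAt (fun θ => ∑ a : A, π θ i s a) (∑ a : A, D i s a) θ₀ :=
      HasFDerivAt.fun_sum fun a _ => hdiff i s a
    have h2 : (fun θ : Fin d → ℝ => ∑ a : A, π θ i s a) = fun _ => (1 : ℝ) :=
      funext fun θ => hsum θ i s
    rw [h2] at h1
    exact h1.unique (hasFDerivAt_const 1 θ₀)
  have hu0 : ∀ (i : Fin H) (s : S),
      ∑ a : A, π θ₀ i s a • ((π θ₀ i s a)⁻¹ • D i s a) = 0 := by
    intro i s
    have hD : ∀ a : A, π θ₀ i s a • ((π θ₀ i s a)⁻¹ • D i s a) = D i s a := by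
      intro a
      rw [smul_smul, mul_inv_cancel₀ (hpos i s a).ne', one_smul]
    simp only [hD]
    exact hD0 i s
  have hτ : ∀ τ : Traj S A H, HasFDerivAt
      (fun θ => trajProb ρ P (π θ) τ * F (visitedAll τ))
      (F (visitedAll τ) • (trajProb ρ P (π θ₀) τ • ∑ i : Fin H, (π θ₀ i (τ.1 i.castSucc) (τ.2 i))⁻¹ • D i (τ.1 i.castSucc) (τ.2 i))) θ₀ := by
    intro τ
    have hprod : HasFDerivAt
        (fun θ => ∏ h : Fin H, π θ h (τ.1 h.castSucc) (τ.2 h) *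
          P h (τ.1 h.castSucc) (τ.2 h) (τ.1 h.succ))
        (∑ i ∈ Finset.univ, (∏ j ∈ Finset.univ.erase i,
            π θ₀ j (τ.1 j.castSucc) (τ.2 j) * P j (τ.1 j.castSucc) (τ.2 j) (τ.1 j.succ)) •
          ((P i (τ.1 i.castSucc) (τ.2 i) (τ.1 i.succ)) • D i (τ.1 i.castSucc) (τ.2 i))) θ₀ :=
      HasFDerivAt.finset_prod fun i _ => (hdiff i _ _).mul_const _
    have h2 := (hprod.const_mul (ρ (τ.1 0))).mul_const (F (visitedAll τ))
    refine h2.congr_fderiv ?_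
    congr 1
    rw [Finset.smul_sum, Finset.smul_sum]
    refine Finset.sum_congr rfl fun i _ => ?_
    rw [smul_smul, smul_smul, smul_smul]
    congr 1
    have hp : trajProb ρ P (π θ₀) τ = ρ (τ.1 0) *
        ((π θ₀ i (τ.1 i.castSucc) (τ.2 i) * P i (τ.1 i.castSucc) (τ.2 i) (τ.1 i.succ)) *
          ∏ j ∈ Finset.univ.erase i, π θ₀ j (τ.1 j.castSucc) (τ.2 j) *
            P j (τ.1 j.castSucc) (τ.2 j) (τ.1 j.succ)) := by
      unfold trajProb
      congr 1
      exact (Finset.mul_prod_erase Finset.univ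
        (fun j => π θ₀ j (τ.1 j.castSucc) (τ.2 j) * P j (τ.1 j.castSucc) (τ.2 j) (τ.1 j.succ))
        (Finset.mem_univ i)).symm
    have hne := (hpos i (τ.1 i.castSucc) (τ.2 i)).ne'
    rw [hp, eq_mul_inv_iff_mul_eq₀ hne]
    ring
  have hJ : HasFDerivAt (fun θ => Jobj ρ P F (π θ))
      (∑ τ : Traj S A H, F (visitedAll τ) • (trajProb ρ P (π θ₀) τ • ∑ i : Fin H, (π θ₀ i (τ.1 i.castSucc) (τ.2 i))⁻¹ • D i (τ.1 i.castSucc) (τ.2 i))) θ₀ :=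
    HasFDerivAt.fun_sum fun τ _ => hτ τ
  have hvan : ∀ i : Fin H, ∑ τ : Traj S A H, trajProb ρ P (π θ₀) τ •
      ((F (visitedUpTo τ i.castSucc) + b i (prefixOf τ i)) • ((π θ₀ i (τ.1 i.castSucc) (τ.2 i))⁻¹ • D i (τ.1 i.castSucc) (τ.2 i))) = 0 := by
    intro i
    have hz := score_sum_zero (E := (Fin d → ℝ) →L[ℝ] ℝ) H (π θ₀) P (hsum θ₀) hP1 ρ i
      (fun ts ta => F ((Finset.univ : Finset (Fin (i.1 + 1))).image
          (fun l => (Fin.castLE (Nat.succ_le_succ i.2.le) l, ts l)))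
        + b i (⟨fun l => (ts l.castSucc, ta l), ts (Fin.last i.1)⟩))
      (fun s a => (π θ₀ i s a)⁻¹ • D i s a) (hu0 i)
    rw [← hz]
    rw [Fintype.sum_prod_type (f := fun τ : Traj S A H => trajProb ρ P (π θ₀) τ •
      ((F (visitedUpTo τ i.castSucc) + b i (prefixOf τ i)) •
        ((π θ₀ i (τ.1 i.castSucc) (τ.2 i))⁻¹ • D i (τ.1 i.castSucc) (τ.2 i))))]
    refine Finset.sum_congr rfl fun s _ => Finset.sum_congr rfl fun a _ => ?_
    rw [visited_trunc (τ := (s, a)) i]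
    rfl
  have hkey : ∀ τ : Traj S A H,
      trajProb ρ P (π θ₀) τ •
        ∑ i : Fin H,
          ((∑ j ∈ Finset.univ.filter fun j : Fin H => i ≤ j,
              (F (visitedUpTo τ j.succ) - F (visitedUpTo τ j.castSucc)))
            - b i (prefixOf τ i)) • ((π θ₀ i (τ.1 i.castSucc) (τ.2 i))⁻¹ • D i (τ.1 i.castSucc) (τ.2 i))
      = F (visitedAll τ) • (trajProb ρ P (π θ₀) τ • ∑ i : Fin H, (π θ₀ i (τ.1 i.castSucc) (τ.2 i))⁻¹ • D i (τ.1 i.castSucc) (τ.2 i))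
        - ∑ i : Fin H, trajProb ρ P (π θ₀) τ •
            ((F (visitedUpTo τ i.castSucc) + b i (prefixOf τ i)) • ((π θ₀ i (τ.1 i.castSucc) (τ.2 i))⁻¹ • D i (τ.1 i.castSucc) (τ.2 i))) := by
    intro τ
    have hc : ∀ i : Fin H,
        ((∑ j ∈ Finset.univ.filter fun j : Fin H => i ≤ j,
            (F (visitedUpTo τ j.succ) - F (visitedUpTo τ j.castSucc)))
          - b i (prefixOf τ i)) • ((π θ₀ i (τ.1 i.castSucc) (τ.2 i))⁻¹ • D i (τ.1 i.castSucc) (τ.2 i))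
        = F (visitedAll τ) • ((π θ₀ i (τ.1 i.castSucc) (τ.2 i))⁻¹ • D i (τ.1 i.castSucc) (τ.2 i))
          - (F (visitedUpTo τ i.castSucc) + b i (prefixOf τ i)) • ((π θ₀ i (τ.1 i.castSucc) (τ.2 i))⁻¹ • D i (τ.1 i.castSucc) (τ.2 i)) := by
      intro i
      rw [telescope F τ i]
      module
    calc trajProb ρ P (π θ₀) τ •
          ∑ i : Fin H,
            ((∑ j ∈ Finset.univ.filter fun j : Fin H => i ≤ j,
                (F (visitedUpTo τ j.succ) - F (visitedUpTo τ j.castSucc)))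
              - b i (prefixOf τ i)) • ((π θ₀ i (τ.1 i.castSucc) (τ.2 i))⁻¹ • D i (τ.1 i.castSucc) (τ.2 i))
        = trajProb ρ P (π θ₀) τ •
            ((∑ i : Fin H, F (visitedAll τ) • ((π θ₀ i (τ.1 i.castSucc) (τ.2 i))⁻¹ • D i (τ.1 i.castSucc) (τ.2 i)))
              - ∑ i : Fin H, (F (visitedUpTo τ i.castSucc) + b i (prefixOf τ i)) • ((π θ₀ i (τ.1 i.castSucc) (τ.2 i))⁻¹ • D i (τ.1 i.castSucc) (τ.2 i))) := by
          rw [← Finset.sum_sub_distrib]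
          congr 1
          exact Finset.sum_congr rfl fun i _ => hc i
      _ = F (visitedAll τ) • (trajProb ρ P (π θ₀) τ • ∑ i : Fin H, (π θ₀ i (τ.1 i.castSucc) (τ.2 i))⁻¹ • D i (τ.1 i.castSucc) (τ.2 i))
          - ∑ i : Fin H, trajProb ρ P (π θ₀) τ •
              ((F (visitedUpTo τ i.castSucc) + b i (prefixOf τ i)) • ((π θ₀ i (τ.1 i.castSucc) (τ.2 i))⁻¹ • D i (τ.1 i.castSucc) (τ.2 i))) := by
          rw [smul_sub]
          congr 1
          · rw [← Finset.smul_sum]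
            exact smul_comm _ _ _
          · exact Finset.smul_sum
  have hfinal : (∑ τ : Traj S A H,
      trajProb ρ P (π θ₀) τ •
        ∑ i : Fin H,
          ((∑ j ∈ Finset.univ.filter fun j : Fin H => i ≤ j,
              (F (visitedUpTo τ j.succ) - F (visitedUpTo τ j.castSucc)))
            - b i (prefixOf τ i)) • ((π θ₀ i (τ.1 i.castSucc) (τ.2 i))⁻¹ • D i (τ.1 i.castSucc) (τ.2 i)))
      = ∑ τ : Traj S A H, F (visitedAll τ) • (trajProb ρ P (π θ₀) τ • ∑ i : Fin H, (π θ₀ i (τ.1 i.castSucc) (τ.2 i))⁻¹ • D i (τ.1 i.castSucc) (τ.2 i)) := by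
    calc (∑ τ : Traj S A H,
        trajProb ρ P (π θ₀) τ •
          ∑ i : Fin H,
            ((∑ j ∈ Finset.univ.filter fun j : Fin H => i ≤ j,
                (F (visitedUpTo τ j.succ) - F (visitedUpTo τ j.castSucc)))
              - b i (prefixOf τ i)) • ((π θ₀ i (τ.1 i.castSucc) (τ.2 i))⁻¹ • D i (τ.1 i.castSucc) (τ.2 i)))
        = ∑ τ : Traj S A H,
            (F (visitedAll τ) • (trajProb ρ P (π θ₀) τ • ∑ i : Fin H, (π θ₀ i (τ.1 i.castSucc) (τ.2 i))⁻¹ • D i (τ.1 i.castSucc) (τ.2 i))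
              - ∑ i : Fin H, trajProb ρ P (π θ₀) τ •
                  ((F (visitedUpTo τ i.castSucc) + b i (prefixOf τ i)) • ((π θ₀ i (τ.1 i.castSucc) (τ.2 i))⁻¹ • D i (τ.1 i.castSucc) (τ.2 i)))) :=
          Finset.sum_congr rfl fun τ _ => hkey τ
      _ = (∑ τ : Traj S A H, F (visitedAll τ) • (trajProb ρ P (π θ₀) τ • ∑ i : Fin H, (π θ₀ i (τ.1 i.castSucc) (τ.2 i))⁻¹ • D i (τ.1 i.castSucc) (τ.2 i)))
          - ∑ τ : Traj S A H, ∑ i : Fin H, trajProb ρ P (π θ₀) τ •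
              ((F (visitedUpTo τ i.castSucc) + b i (prefixOf τ i)) • ((π θ₀ i (τ.1 i.castSucc) (τ.2 i))⁻¹ • D i (τ.1 i.castSucc) (τ.2 i))) :=
          Finset.sum_sub_distrib _ _
      _ = ∑ τ : Traj S A H, F (visitedAll τ) • (trajProb ρ P (π θ₀) τ • ∑ i : Fin H, (π θ₀ i (τ.1 i.castSucc) (τ.2 i))⁻¹ • D i (τ.1 i.castSucc) (τ.2 i)) := by
          rw [Finset.sum_comm, Finset.sum_eq_zero fun i _ => hvan i, sub_zero]
  exact hJ.congr_fderiv hfinal.symm
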